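/- Let λ = (λ_{ij})_{1 ≤ j ≤ i ≤ n} be complex variables and for m ≤ n, k ≥ 1 define γ_{mk}(λ) = Σ_{i=1}^m (λ_{mi} + m - 1)^k ∏_{j ≠ i} (1 - 1/(λ_{mi} - λ_{mj})), defined on the locus where λ_{mi} ≠ λ_{mj} for i ≠ j. Then γ_{mk} is symmetric under any permutation of the variables λ_{m1}, …, λ_{mm}. -/

import Mathlib

open Finset in
/-- The Gelfand–Tsetlin generators `γ_{mk}` are symmetric under permutations of
the row-`m` variables. -/
theorem gamma_symmetric
    (m k : ℕ) (x : Fin m → ℂ) (hx : Function.Injective x)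
    (σ : Equiv.Perm (Fin m)) :
    ∑ i : Fin m, (x (σ i) + (m : ℂ) - 1) ^ k *
        ∏ j ∈ univ.erase i, (1 - 1 / (x (σ i) - x (σ j))) =
      ∑ i : Fin m, (x i + (m : ℂ) - 1) ^ k *
        ∏ j ∈ univ.erase i, (1 - 1 / (x i - x j)) := by
  have key : ∀ i : Fin m,
      (∏ j ∈ univ.erase i, (1 - 1 / (x (σ i) - x (σ j)))) =
        ∏ j ∈ univ.erase (σ i), (1 - 1 / (x (σ i) - x j)) := by
    intro i
    refine Finset.prod_nbij σ ?_ ?_ ?_ ?_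
    · intro a ha
      simp only [mem_erase, mem_univ, and_true] at ha ⊢
      exact fun h => ha (σ.injective h)
    · intro a _ b _ h
      exact σ.injective h
    · intro b hb
      simp only [coe_erase, coe_univ, Set.mem_diff, Set.mem_univ, Set.mem_singleton_iff,
        true_and] at hb ⊢
      exact ⟨σ.symm b, ⟨Set.mem_univ _, fun h => hb (by rw [← Set.mem_singleton_iff.mp h, σ.apply_symm_apply])⟩, σ.apply_symm_apply b⟩
    · intro a _; rfl
  calc ∑ i : Fin m, (x (σ i) + (m : ℂ) - 1) ^ k *
        ∏ j ∈ univ.erase i, (1 - 1 / (x (σ i) - x (σ j)))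
      = ∑ i : Fin m, (x (σ i) + (m : ℂ) - 1) ^ k *
        ∏ j ∈ univ.erase (σ i), (1 - 1 / (x (σ i) - x j)) := by
        simp_rw [key]
    _ = ∑ i : Fin m, (x i + (m : ℂ) - 1) ^ k *
        ∏ j ∈ univ.erase i, (1 - 1 / (x i - x j)) :=
        Equiv.sum_comp σ fun i => (x i + (m : ℂ) - 1) ^ k *
          ∏ j ∈ univ.erase i, (1 - 1 / (x i - x j))
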